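/- Let K be a commutative ring, A and B K-algebras projective over K, M an (A,B)-bimodule and N a (B,A)-bimodule, with M projective as a left A-module and as a right B-module, and N projective as a left B-module and as a right A-module. Then for every complex C of A-bimodules (e.g., the bar resolution of A), there is a natural isomorphism of complexes of K-modules (M ⊗_B N) ⊗_{A^e} C ≅ B ⊗_{B^e} (N ⊗_A C ⊗_A M), given by (m ⊗ n) ⊗ u ↦ 1 ⊗ (n ⊗ u ⊗ m). -/

import Mathlib

open TensorProduct MulOpposite

section pd
universe v
/-- `pdLE R n M` : `M` has projective dimension at most `n` as an `R`-module. -/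
def pdLE (R : Type*) [Ring R] : (n : ℕ) → (M : Type v) → [AddCommGroup M] → [Module R M] → Prop
  | 0, M, _, _ => Module.Projective R M
  | n+1, M, _, _ => ∃ (P : Type v) (_ : AddCommGroup P) (_ : Module R P) (f : P →ₗ[R] M),
      Module.Projective R P ∧ Function.Surjective f ∧ pdLE R n (LinearMap.ker f)
end pd

section BT
attribute [local instance 2000] TensorProduct.instModule
variable (R : Type*) [Ring R]
variable (M : Type*) [AddCommGroup M] [Module Rᵐᵒᵖ M]
variable (N : Type*) [AddCommGroup N] [Module R N]

/-- The balancing relations for the tensor product `M ⊗_R N` of a right `R`-module `M`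
and a left `R`-module `N` over a (possibly noncommutative) ring `R`. -/
def balRel : Submodule ℤ (M ⊗[ℤ] N) :=
  Submodule.span ℤ {x | ∃ (m : M) (r : R) (n : N), x = (op r • m) ⊗ₜ[ℤ] n - m ⊗ₜ[ℤ] (r • n)}

/-- The balanced tensor product `M ⊗_R N` over a (possibly noncommutative) ring `R`:
the quotient of `M ⊗_ℤ N` by the balancing relations. -/
def BalancedTensor := (M ⊗[ℤ] N) ⧸ balRel R M N

noncomputable instance : AddCommGroup (BalancedTensor R M N) :=
  inferInstanceAs (AddCommGroup ((M ⊗[ℤ] N) ⧸ balRel R M N))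

/-- The class of `m ⊗ n` in the balanced tensor product. -/
noncomputable def BalancedTensor.mk (m : M) (n : N) : BalancedTensor R M N :=
  Submodule.Quotient.mk (m ⊗ₜ[ℤ] n)

namespace BalancedTensor

section left
variable (S : Type*) [Ring S] [Module S M] [SMulCommClass S Rᵐᵒᵖ M]

lemma lsmul_le (s : S) : balRel R M N ≤ Submodule.comap
    (TensorProduct.map ((DistribMulAction.toAddMonoidHom M s).toIntLinearMap) LinearMap.id)
    (balRel R M N) := by
  refine Submodule.span_le.2 ?_
  rintro x ⟨m, r, n, rfl⟩
  simp only [SetLike.mem_coe, Submodule.mem_comap, map_sub, TensorProduct.map_tmul,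
    AddMonoidHom.coe_toIntLinearMap, DistribMulAction.toAddMonoidHom_apply,
    LinearMap.id_coe, id_eq]
  rw [smul_comm]
  exact Submodule.subset_span ⟨s • m, r, n, rfl⟩

noncomputable def lsmulAux (s : S) : BalancedTensor R M N →ₗ[ℤ] BalancedTensor R M N :=
  Submodule.mapQ _ _ _ (lsmul_le R M N S s)

lemma lsmulAux_mk (s : S) (y : M ⊗[ℤ] N) :
    lsmulAux R M N S s (Submodule.Quotient.mk y) = Submodule.Quotient.mk
      (TensorProduct.map ((DistribMulAction.toAddMonoidHom M s).toIntLinearMap) LinearMap.id y) :=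
  Submodule.mapQ_apply _ _ _ y

noncomputable instance instModuleLeft : Module S (BalancedTensor R M N) where
  smul s x := lsmulAux R M N S s x
  one_smul x := by
    obtain ⟨y, rfl⟩ := Submodule.Quotient.mk_surjective _ x
    show lsmulAux R M N S 1 (Submodule.Quotient.mk y) = _
    rw [lsmulAux_mk]
    congr 1
    induction y using TensorProduct.induction_on with
    | zero => simp
    | tmul m n => simp
    | add a b ha hb => simp only [map_add, ha, hb]
  mul_smul s t x := by
    obtain ⟨y, rfl⟩ := Submodule.Quotient.mk_surjective _ x
    show lsmulAux R M N S (s * t) (Submodule.Quotient.mk y) =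
      lsmulAux R M N S s (lsmulAux R M N S t (Submodule.Quotient.mk y))
    simp only [lsmulAux_mk]
    congr 1
    induction y using TensorProduct.induction_on with
    | zero => simp
    | tmul m n => simp [mul_smul]
    | add a b ha hb => simp only [map_add, ha, hb]
  smul_zero s := map_zero (lsmulAux R M N S s)
  smul_add s x y := map_add (lsmulAux R M N S s) x y
  add_smul s t x := by
    obtain ⟨y, rfl⟩ := Submodule.Quotient.mk_surjective _ x
    show lsmulAux R M N S (s + t) (Submodule.Quotient.mk y) =
      lsmulAux R M N S s (Submodule.Quotient.mk y) + lsmulAux R M N S t (Submodule.Quotient.mk y)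
    simp only [lsmulAux_mk, ← Submodule.Quotient.mk_add]
    congr 1
    induction y using TensorProduct.induction_on with
    | zero => simp
    | tmul m n => simp [add_smul, TensorProduct.add_tmul]
    | add a b ha hb =>
        simp only [map_add] at ha hb ⊢
        rw [ha, hb]; abel
  zero_smul x := by
    obtain ⟨y, rfl⟩ := Submodule.Quotient.mk_surjective _ x
    show lsmulAux R M N S 0 (Submodule.Quotient.mk y) = 0
    rw [lsmulAux_mk, show (0 : BalancedTensor R M N) = Submodule.Quotient.mk 0 from rfl]
    congr 1
    induction y using TensorProduct.induction_on with
    | zero => simp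
    | tmul m n => simp [TensorProduct.zero_tmul]
    | add a b ha hb => rw [map_add, ha, hb]; simp

lemma smul_mk (s : S) (m : M) (n : N) :
    s • (BalancedTensor.mk R M N m n) = BalancedTensor.mk R M N (s • m) n := by
  show lsmulAux R M N S s _ = _
  rw [BalancedTensor.mk, lsmulAux_mk]
  simp [BalancedTensor.mk]
  rfl
end left

section right
variable (S : Type*) [Ring S] [Module S N] [SMulCommClass S R N]

lemma rsmul_le (s : S) : balRel R M N ≤ Submodule.comap
    (TensorProduct.map LinearMap.id ((DistribMulAction.toAddMonoidHom N s).toIntLinearMap))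
    (balRel R M N) := by
  refine Submodule.span_le.2 ?_
  rintro x ⟨m, r, n, rfl⟩
  simp only [SetLike.mem_coe, Submodule.mem_comap, map_sub, TensorProduct.map_tmul,
    AddMonoidHom.coe_toIntLinearMap, DistribMulAction.toAddMonoidHom_apply,
    LinearMap.id_coe, id_eq]
  rw [smul_comm s r n]
  exact Submodule.subset_span ⟨m, r, s • n, rfl⟩

noncomputable def rsmulAux (s : S) : BalancedTensor R M N →ₗ[ℤ] BalancedTensor R M N :=
  Submodule.mapQ _ _ _ (rsmul_le R M N S s)

lemma rsmulAux_mk (s : S) (y : M ⊗[ℤ] N) :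
    rsmulAux R M N S s (Submodule.Quotient.mk y) = Submodule.Quotient.mk
      (TensorProduct.map LinearMap.id ((DistribMulAction.toAddMonoidHom N s).toIntLinearMap) y) :=
  Submodule.mapQ_apply _ _ _ y

noncomputable instance instModuleRight : Module S (BalancedTensor R M N) where
  smul s x := rsmulAux R M N S s x
  one_smul x := by
    obtain ⟨y, rfl⟩ := Submodule.Quotient.mk_surjective _ x
    show rsmulAux R M N S 1 (Submodule.Quotient.mk y) = _
    rw [rsmulAux_mk]
    congr 1
    induction y using TensorProduct.induction_on with
    | zero => simp
    | tmul m n => simp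
    | add a b ha hb => simp only [map_add, ha, hb]
  mul_smul s t x := by
    obtain ⟨y, rfl⟩ := Submodule.Quotient.mk_surjective _ x
    show rsmulAux R M N S (s * t) (Submodule.Quotient.mk y) =
      rsmulAux R M N S s (rsmulAux R M N S t (Submodule.Quotient.mk y))
    simp only [rsmulAux_mk]
    congr 1
    induction y using TensorProduct.induction_on with
    | zero => simp
    | tmul m n => simp [mul_smul]
    | add a b ha hb => simp only [map_add, ha, hb]
  smul_zero s := map_zero (rsmulAux R M N S s)
  smul_add s x y := map_add (rsmulAux R M N S s) x y
  add_smul s t x := by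
    obtain ⟨y, rfl⟩ := Submodule.Quotient.mk_surjective _ x
    show rsmulAux R M N S (s + t) (Submodule.Quotient.mk y) =
      rsmulAux R M N S s (Submodule.Quotient.mk y) + rsmulAux R M N S t (Submodule.Quotient.mk y)
    simp only [rsmulAux_mk, ← Submodule.Quotient.mk_add]
    congr 1
    induction y using TensorProduct.induction_on with
    | zero => simp
    | tmul m n => simp [add_smul, TensorProduct.tmul_add]
    | add a b ha hb =>
        simp only [map_add] at ha hb ⊢
        rw [ha, hb]; abel
  zero_smul x := by
    obtain ⟨y, rfl⟩ := Submodule.Quotient.mk_surjective _ x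
    show rsmulAux R M N S 0 (Submodule.Quotient.mk y) = 0
    rw [rsmulAux_mk, show (0 : BalancedTensor R M N) = Submodule.Quotient.mk 0 from rfl]
    congr 1
    induction y using TensorProduct.induction_on with
    | zero => simp
    | tmul m n => simp [TensorProduct.tmul_zero]
    | add a b ha hb => rw [map_add, ha, hb]; simp

lemma rsmul_mk (s : S) (m : M) (n : N) :
    (instModuleRight R M N S).toSMul.smul s (BalancedTensor.mk R M N m n)
      = BalancedTensor.mk R M N m (s • n) := by
  show rsmulAux R M N S s _ = _
  rw [BalancedTensor.mk, rsmulAux_mk]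
  simp [BalancedTensor.mk]
  rfl
end right

section tmap
variable {M' : Type*} [AddCommGroup M'] [Module Rᵐᵒᵖ M']
variable {N' : Type*} [AddCommGroup N'] [Module R N']

lemma tmapLeft_le (f : M →ₗ[Rᵐᵒᵖ] M') : balRel R M N ≤ Submodule.comap
    (TensorProduct.map (f.toAddMonoidHom.toIntLinearMap) LinearMap.id) (balRel R M' N) := by
  refine Submodule.span_le.2 ?_
  rintro x ⟨m, r, n, rfl⟩
  simp only [SetLike.mem_coe, Submodule.mem_comap, map_sub, TensorProduct.map_tmul,
    AddMonoidHom.coe_toIntLinearMap, LinearMap.toAddMonoidHom_coe, LinearMap.id_coe, id_eq,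
    map_smul]
  exact Submodule.subset_span ⟨f m, r, n, rfl⟩

/-- Functoriality of the balanced tensor product in the left variable. -/
noncomputable def tmapLeft (f : M →ₗ[Rᵐᵒᵖ] M') :
    BalancedTensor R M N →+ BalancedTensor R M' N :=
  (Submodule.mapQ _ _ _ (tmapLeft_le R M N f)).toAddMonoidHom

lemma tmapLeft_mk (f : M →ₗ[Rᵐᵒᵖ] M') (m : M) (n : N) :
    tmapLeft R M N f (BalancedTensor.mk R M N m n) = BalancedTensor.mk R M' N (f m) n := by
  have h := Submodule.mapQ_apply (balRel R M N) (balRel R M' N)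
    (TensorProduct.map (f.toAddMonoidHom.toIntLinearMap) LinearMap.id)
    (h := tmapLeft_le R M N f) (m ⊗ₜ[ℤ] n)
  exact h.trans (by simp [BalancedTensor.mk])

lemma tmapRight_le (f : N →ₗ[R] N') : balRel R M N ≤ Submodule.comap
    (TensorProduct.map LinearMap.id (f.toAddMonoidHom.toIntLinearMap)) (balRel R M N') := by
  refine Submodule.span_le.2 ?_
  rintro x ⟨m, r, n, rfl⟩
  simp only [SetLike.mem_coe, Submodule.mem_comap, map_sub, TensorProduct.map_tmul,
    AddMonoidHom.coe_toIntLinearMap, LinearMap.toAddMonoidHom_coe, LinearMap.id_coe, id_eq,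
    map_smul]
  exact Submodule.subset_span ⟨m, r, f n, rfl⟩

/-- Functoriality of the balanced tensor product in the right variable. -/
noncomputable def tmapRight (f : N →ₗ[R] N') :
    BalancedTensor R M N →+ BalancedTensor R M N' :=
  (Submodule.mapQ _ _ _ (tmapRight_le R M N f)).toAddMonoidHom

lemma tmapRight_mk (f : N →ₗ[R] N') (m : M) (n : N) :
    tmapRight R M N f (BalancedTensor.mk R M N m n) = BalancedTensor.mk R M N' m (f n) := by
  have h := Submodule.mapQ_apply (balRel R M N) (balRel R M N')
    (TensorProduct.map LinearMap.id (f.toAddMonoidHom.toIntLinearMap))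
    (h := tmapRight_le R M N f) (m ⊗ₜ[ℤ] n)
  exact h.trans (by simp [BalancedTensor.mk])

end tmap
end BalancedTensor
end BT
section more
attribute [local instance 2000] TensorProduct.instModule
open TensorProduct MulOpposite
variable (R : Type*) [Ring R]
variable (M : Type*) [AddCommGroup M] [Module Rᵐᵒᵖ M]
variable (N : Type*) [AddCommGroup N] [Module R N]

namespace BalancedTensor

instance smulCommClass_out (S T : Type*) [Ring S] [Ring T]
    [Module S M] [SMulCommClass S Rᵐᵒᵖ M] [Module T N] [SMulCommClass T R N] :
    SMulCommClass S T (BalancedTensor R M N) := by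
  constructor
  intro s t x
  obtain ⟨y, rfl⟩ := Submodule.Quotient.mk_surjective _ x
  show lsmulAux R M N S s (rsmulAux R M N T t (Submodule.Quotient.mk y)) =
    rsmulAux R M N T t (lsmulAux R M N S s (Submodule.Quotient.mk y))
  simp only [lsmulAux_mk, rsmulAux_mk]
  congr 1
  induction y using TensorProduct.induction_on with
  | zero => simp
  | tmul m n => simp
  | add a b ha hb => simp only [map_add, ha, hb]

variable {M' : Type*} [AddCommGroup M'] [Module Rᵐᵒᵖ M']
variable {N' : Type*} [AddCommGroup N'] [Module R N']

/-- `tmapLeft`, bundled as an `S`-linear map for an outer action of `S`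
on the right-hand factor. -/
noncomputable def tmapLeftE (S : Type*) [Ring S] [Module S N] [SMulCommClass S R N]
    (f : M →ₗ[Rᵐᵒᵖ] M') : BalancedTensor R M N →ₗ[S] BalancedTensor R M' N where
  toFun := tmapLeft R M N f
  map_add' := map_add _
  map_smul' := by
    intro s x
    obtain ⟨y, rfl⟩ := Submodule.Quotient.mk_surjective _ x
    show tmapLeft R M N f (rsmulAux R M N S s (Submodule.Quotient.mk y)) =
      rsmulAux R M' N S s (tmapLeft R M N f (Submodule.Quotient.mk y))
    have h1 := Submodule.mapQ_apply (balRel R M N) (balRel R M' N)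
      (TensorProduct.map (f.toAddMonoidHom.toIntLinearMap) LinearMap.id)
      (h := tmapLeft_le R M N f)
    show Submodule.mapQ _ _ (TensorProduct.map (f.toAddMonoidHom.toIntLinearMap) LinearMap.id)
        (tmapLeft_le R M N f) (rsmulAux R M N S s (Submodule.Quotient.mk y)) =
      rsmulAux R M' N S s (Submodule.mapQ _ _
        (TensorProduct.map (f.toAddMonoidHom.toIntLinearMap) LinearMap.id)
        (tmapLeft_le R M N f) (Submodule.Quotient.mk y))
    simp only [rsmulAux_mk, h1]
    congr 1
    induction y using TensorProduct.induction_on with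
    | zero => simp
    | tmul m n => simp
    | add a b ha hb => simp only [map_add, ha, hb]

/-- `tmapRight`, bundled as an `S`-linear map for an outer action of `S`
on the left-hand factor. -/
noncomputable def tmapRightE (S : Type*) [Ring S] [Module S M] [SMulCommClass S Rᵐᵒᵖ M]
    (f : N →ₗ[R] N') : BalancedTensor R M N →ₗ[S] BalancedTensor R M N' where
  toFun := tmapRight R M N f
  map_add' := map_add _
  map_smul' := by
    intro s x
    obtain ⟨y, rfl⟩ := Submodule.Quotient.mk_surjective _ x
    show tmapRight R M N f (lsmulAux R M N S s (Submodule.Quotient.mk y)) =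
      lsmulAux R M N' S s (tmapRight R M N f (Submodule.Quotient.mk y))
    have h1 := Submodule.mapQ_apply (balRel R M N) (balRel R M N')
      (TensorProduct.map LinearMap.id (f.toAddMonoidHom.toIntLinearMap))
      (h := tmapRight_le R M N f)
    show Submodule.mapQ _ _ (TensorProduct.map LinearMap.id (f.toAddMonoidHom.toIntLinearMap))
        (tmapRight_le R M N f) (lsmulAux R M N S s (Submodule.Quotient.mk y)) =
      lsmulAux R M N' S s (Submodule.mapQ _ _
        (TensorProduct.map LinearMap.id (f.toAddMonoidHom.toIntLinearMap))
        (tmapRight_le R M N f) (Submodule.Quotient.mk y))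
    simp only [lsmulAux_mk, h1]
    congr 1
    induction y using TensorProduct.induction_on with
    | zero => simp
    | tmul m n => simp
    | add a b ha hb => simp only [map_add, ha, hb]

end BalancedTensor
end more

section homology
/-- The homology of a pair of composable maps of abelian groups. -/
def homologyAt {T₁ T₂ T₃ : Type*} [AddCommGroup T₁] [AddCommGroup T₂] [AddCommGroup T₃]
    (f : T₁ →+ T₂) (g : T₂ →+ T₃) : Type _ :=
  g.ker ⧸ (f.range.addSubgroupOf g.ker)
end homology

noncomputable instance homologyAt.instAddCommGroup {T₁ T₂ T₃ : Type*} [AddCommGroup T₁]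
    [AddCommGroup T₂] [AddCommGroup T₃] (f : T₁ →+ T₂) (g : T₂ →+ T₃) :
    AddCommGroup (homologyAt f g) :=
  inferInstanceAs (AddCommGroup (g.ker ⧸ (f.range.addSubgroupOf g.ker)))

open MulOpposite TensorProduct
universe u
section auxBT
open TensorProduct MulOpposite
variable (R : Type*) [Ring R]
variable (M : Type*) [AddCommGroup M] [Module Rᵐᵒᵖ M]
variable (N : Type*) [AddCommGroup N] [Module R N]

namespace BalancedTensor

lemma mk_add_left' (m m' : M) (n : N) :
    mk R M N (m + m') n = mk R M N m n + mk R M N m' n := by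
  simp only [mk, TensorProduct.add_tmul, Submodule.Quotient.mk_add]
  rfl

lemma mk_add_right' (m : M) (n n' : N) :
    mk R M N m (n + n') = mk R M N m n + mk R M N m n' := by
  simp only [mk, TensorProduct.tmul_add, Submodule.Quotient.mk_add]
  rfl

lemma mk_zero_left' (n : N) : mk R M N 0 n = 0 := by
  simp only [mk, TensorProduct.zero_tmul, Submodule.Quotient.mk_zero]
  rfl

lemma mk_zero_right' (m : M) : mk R M N m 0 = 0 := by
  simp only [mk, TensorProduct.tmul_zero, Submodule.Quotient.mk_zero]
  rfl

lemma mk_rel (m : M) (r : R) (n : N) :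
    mk R M N (op r • m) n = mk R M N m (r • n) := by
  rw [mk, mk]; refine (Submodule.Quotient.eq _).2 ?_
  exact Submodule.subset_span ⟨m, r, n, rfl⟩

lemma ind {C : BalancedTensor R M N → Prop} (zero : C 0)
    (hmk : ∀ m n, C (BalancedTensor.mk R M N m n))
    (add : ∀ x y, C x → C y → C (x + y)) : ∀ x, C x := by
  intro x
  obtain ⟨y, rfl⟩ := Submodule.Quotient.mk_surjective _ x
  induction y using TensorProduct.induction_on with
  | zero => exact zero
  | tmul m n => exact hmk m n
  | add a b ha hb => rw [Submodule.Quotient.mk_add]; exact add _ _ ha hb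

/-- Lift a balanced biadditive map to the balanced tensor product. -/
noncomputable def liftAH {P : Type*} [AddCommGroup P] (f : M →+ N →+ P)
    (hf : ∀ (m : M) (r : R) (n : N), f (op r • m) n = f m (r • n)) :
    BalancedTensor R M N →+ P :=
  ((balRel R M N).liftQ
    (TensorProduct.liftAddHom f (fun z m n => by
      rw [map_zsmul, map_zsmul, AddMonoidHom.smul_apply])).toIntLinearMap
    (by
      refine Submodule.span_le.2 ?_
      rintro x ⟨m, r, n, rfl⟩
      exact (LinearMap.mem_ker (f := (TensorProduct.liftAddHom f (fun z m n => by
        rw [map_zsmul, map_zsmul, AddMonoidHom.smul_apply])).toIntLinearMap)).2 (by simp [hf]))).toAddMonoidHom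

lemma liftAH_mk {P : Type*} [AddCommGroup P] (f : M →+ N →+ P)
    (hf : ∀ (m : M) (r : R) (n : N), f (op r • m) n = f m (r • n)) (m : M) (n : N) :
    liftAH R M N f hf (mk R M N m n) = f m n := rfl

lemma rsmul_mk' (S : Type*) [Ring S] [Module S N] [SMulCommClass S R N] (s : S) (m : M) (n : N) :
    s • (mk R M N m n) = mk R M N m (s • n) := rsmul_mk R M N S s m n

end BalancedTensor
end auxBT
section keyAux
open TensorProduct MulOpposite

variable (K : Type u) [CommRing K] (A B : Type u) [Ring A] [Ring B] [Algebra K A] [Algebra K B]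
variable (M : Type u) [AddCommGroup M] [Module A M] [Module Bᵐᵒᵖ M]
  [SMulCommClass A Bᵐᵒᵖ M] [SMulCommClass Bᵐᵒᵖ A M]
variable (N : Type u) [AddCommGroup N] [Module B N] [Module Aᵐᵒᵖ N]
  [SMulCommClass B Aᵐᵒᵖ N] [SMulCommClass Aᵐᵒᵖ B N]
variable (U : Type u) [AddCommGroup U] [Module A U] [Module Aᵐᵒᵖ U]
  [SMulCommClass A Aᵐᵒᵖ U] [SMulCommClass Aᵐᵒᵖ A U]
  [Module (Aᵐᵒᵖ ⊗[K] A) U]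
variable [Module (Aᵐᵒᵖ ⊗[K] A)ᵐᵒᵖ (BalancedTensor B M N)]
variable [Module (Bᵐᵒᵖ ⊗[K] B)ᵐᵒᵖ B]
variable [Module (Bᵐᵒᵖ ⊗[K] B) (BalancedTensor A (BalancedTensor A N U) M)]
variable (hU : ∀ (a a' : A) (u : U),
      (((op a : Aᵐᵒᵖ) ⊗ₜ[K] a' : Aᵐᵒᵖ ⊗[K] A)) • u = a' • ((op a : Aᵐᵒᵖ) • u))
variable (hMN : ∀ (a a' : A) (t : BalancedTensor B M N),
      ((op ((op a : Aᵐᵒᵖ) ⊗ₜ[K] a') : (Aᵐᵒᵖ ⊗[K] A)ᵐᵒᵖ)) • t = a • ((op a' : Aᵐᵒᵖ) • t))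
variable (hBe : ∀ (b b' x : B),
      ((op ((op b : Bᵐᵒᵖ) ⊗ₜ[K] b') : (Bᵐᵒᵖ ⊗[K] B)ᵐᵒᵖ)) • x = b * x * b')
variable (hV : ∀ (b b' : B) (v : BalancedTensor A (BalancedTensor A N U) M),
      (((op b : Bᵐᵒᵖ) ⊗ₜ[K] b' : Bᵐᵒᵖ ⊗[K] B)) • v = b' • ((op b : Bᵐᵒᵖ) • v))

include hU hMN hBe hV

lemma relX1 (a : A) (t : BalancedTensor B M N) (u : U) :
    BalancedTensor.mk (Aᵐᵒᵖ ⊗[K] A) (BalancedTensor B M N) U (a • t) u =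
    BalancedTensor.mk (Aᵐᵒᵖ ⊗[K] A) (BalancedTensor B M N) U t ((op a : Aᵐᵒᵖ) • u) := by
  have h := BalancedTensor.mk_rel (Aᵐᵒᵖ ⊗[K] A) (BalancedTensor B M N) U t
    ((op a : Aᵐᵒᵖ) ⊗ₜ[K] (1 : A)) u
  rw [hMN a 1 t, hU a 1 u, op_one, one_smul, one_smul] at h
  exact h

lemma relX2 (a' : A) (t : BalancedTensor B M N) (u : U) :
    BalancedTensor.mk (Aᵐᵒᵖ ⊗[K] A) (BalancedTensor B M N) U ((op a' : Aᵐᵒᵖ) • t) u =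
    BalancedTensor.mk (Aᵐᵒᵖ ⊗[K] A) (BalancedTensor B M N) U t (a' • u) := by
  have h := BalancedTensor.mk_rel (Aᵐᵒᵖ ⊗[K] A) (BalancedTensor B M N) U t
    ((op (1 : A) : Aᵐᵒᵖ) ⊗ₜ[K] a') u
  rw [hMN 1 a' t, hU 1 a' u, op_one, one_smul, one_smul] at h
  exact h

lemma relYl (b x : B) (v : BalancedTensor A (BalancedTensor A N U) M) :
    BalancedTensor.mk (Bᵐᵒᵖ ⊗[K] B) B (BalancedTensor A (BalancedTensor A N U) M) (x * b) v =
    BalancedTensor.mk (Bᵐᵒᵖ ⊗[K] B) B (BalancedTensor A (BalancedTensor A N U) M) x (b • v) := by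
  have h := BalancedTensor.mk_rel (Bᵐᵒᵖ ⊗[K] B) B (BalancedTensor A (BalancedTensor A N U) M) x
    ((op (1 : B) : Bᵐᵒᵖ) ⊗ₜ[K] b) v
  rw [hBe 1 b x, hV 1 b v, one_mul, op_one, one_smul] at h
  exact h

lemma relYr (b x : B) (v : BalancedTensor A (BalancedTensor A N U) M) :
    BalancedTensor.mk (Bᵐᵒᵖ ⊗[K] B) B (BalancedTensor A (BalancedTensor A N U) M) (b * x) v =
    BalancedTensor.mk (Bᵐᵒᵖ ⊗[K] B) B (BalancedTensor A (BalancedTensor A N U) M) x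
      ((op b : Bᵐᵒᵖ) • v) := by
  have h := BalancedTensor.mk_rel (Bᵐᵒᵖ ⊗[K] B) B (BalancedTensor A (BalancedTensor A N U) M) x
    ((op b : Bᵐᵒᵖ) ⊗ₜ[K] (1 : B)) v
  rw [hBe b 1 x, hV b 1 v, mul_one, one_smul] at h
  exact h

/-- The underlying triadditive map of the forward morphism. -/
noncomputable def fwdCore :
    M →+ N →+ U →+ BalancedTensor (Bᵐᵒᵖ ⊗[K] B) B (BalancedTensor A (BalancedTensor A N U) M) :=
  AddMonoidHom.mk' (fun m => AddMonoidHom.mk' (fun n => AddMonoidHom.mk'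
      (fun u => BalancedTensor.mk (Bᵐᵒᵖ ⊗[K] B) B (BalancedTensor A (BalancedTensor A N U) M) 1
        (BalancedTensor.mk A (BalancedTensor A N U) M (BalancedTensor.mk A N U n u) m))
      (fun u u' => by
        rw [BalancedTensor.mk_add_right' A N U,
          BalancedTensor.mk_add_left' A (BalancedTensor A N U) M,
          BalancedTensor.mk_add_right' (Bᵐᵒᵖ ⊗[K] B) B]))
    (fun n n' => AddMonoidHom.ext fun u => by
      simp only [AddMonoidHom.add_apply, AddMonoidHom.mk'_apply]
      rw [BalancedTensor.mk_add_left' A N U,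
        BalancedTensor.mk_add_left' A (BalancedTensor A N U) M,
        BalancedTensor.mk_add_right' (Bᵐᵒᵖ ⊗[K] B) B]))
  (fun m m' => AddMonoidHom.ext fun n => AddMonoidHom.ext fun u => by
      simp only [AddMonoidHom.add_apply, AddMonoidHom.mk'_apply]
      rw [BalancedTensor.mk_add_right' A (BalancedTensor A N U) M,
        BalancedTensor.mk_add_right' (Bᵐᵒᵖ ⊗[K] B) B])

omit hU hMN hBe hV in
lemma fwdCore_apply (m : M) (n : N) (u : U) :
    fwdCore K A B M N U m n u =
    BalancedTensor.mk (Bᵐᵒᵖ ⊗[K] B) B (BalancedTensor A (BalancedTensor A N U) M) 1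
      (BalancedTensor.mk A (BalancedTensor A N U) M (BalancedTensor.mk A N U n u) m) := rfl

lemma fwdCore_bal (m : M) (b : B) (n : N) :
    fwdCore K A B M N U ((op b : Bᵐᵒᵖ) • m) n =
    fwdCore K A B M N U m (b • n) := by
  ext u
  simp only [fwdCore_apply]
  rw [← BalancedTensor.rsmul_mk' A (BalancedTensor A N U) M Bᵐᵒᵖ (op b)]
  rw [← relYr K A B M N U hU hMN hBe hV b 1, mul_one]
  have h := relYl K A B M N U hU hMN hBe hV b 1
  rw [one_mul] at h
  rw [h, BalancedTensor.smul_mk A (BalancedTensor A N U) M B,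
    BalancedTensor.smul_mk A N U B]

/-- The forward morphism on `M ⊗_B N`, with values in additive maps from `U`. -/
noncomputable def fwdF : BalancedTensor B M N →+
    (U →+ BalancedTensor (Bᵐᵒᵖ ⊗[K] B) B (BalancedTensor A (BalancedTensor A N U) M)) :=
  BalancedTensor.liftAH B M N (fwdCore K A B M N U)
    (fun m b n => fwdCore_bal K A B M N U hU hMN hBe hV m b n)

lemma fwdF_mk (m : M) (n : N) :
    fwdF K A B M N U hU hMN hBe hV (BalancedTensor.mk B M N m n) =
    fwdCore K A B M N U m n := rfl

lemma fwdF_bal (t : BalancedTensor B M N) (r : Aᵐᵒᵖ ⊗[K] A) (u : U) :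
    fwdF K A B M N U hU hMN hBe hV ((op r : (Aᵐᵒᵖ ⊗[K] A)ᵐᵒᵖ) • t) u =
    fwdF K A B M N U hU hMN hBe hV t (r • u) := by
  induction r using TensorProduct.induction_on with
  | zero =>
    have h1 : (op (0 : Aᵐᵒᵖ ⊗[K] A)) • t = 0 := by rw [op_zero]; exact zero_smul (Aᵐᵒᵖ ⊗[K] A)ᵐᵒᵖ t
    have h2 : (0 : Aᵐᵒᵖ ⊗[K] A) • u = 0 := zero_smul (Aᵐᵒᵖ ⊗[K] A) u
    rw [h1, h2]; simp
  | add r r' h h' =>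
      rw [op_add, add_smul, add_smul, map_add, AddMonoidHom.add_apply, h, h', map_add]
  | tmul x a' =>
      rw [← MulOpposite.op_unop x, hMN, hU]
      induction t using BalancedTensor.ind with
      | zero => simp
      | add s s' hs hs' =>
          rw [smul_add, smul_add, map_add, AddMonoidHom.add_apply, hs, hs',
            ← AddMonoidHom.add_apply, ← map_add]
      | hmk m n =>
          rw [BalancedTensor.rsmul_mk' B M N Aᵐᵒᵖ, BalancedTensor.smul_mk B M N A,
            fwdF_mk, fwdF_mk]
          simp only [fwdCore_apply]
          rw [← BalancedTensor.mk_rel A (BalancedTensor A N U) M _ (unop x) m,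
            BalancedTensor.rsmul_mk' A N U Aᵐᵒᵖ, BalancedTensor.mk_rel A N U]

/-- The forward morphism. -/
noncomputable def fwd : BalancedTensor (Aᵐᵒᵖ ⊗[K] A) (BalancedTensor B M N) U →+
    BalancedTensor (Bᵐᵒᵖ ⊗[K] B) B (BalancedTensor A (BalancedTensor A N U) M) :=
  BalancedTensor.liftAH (Aᵐᵒᵖ ⊗[K] A) (BalancedTensor B M N) U
    (fwdF K A B M N U hU hMN hBe hV)
    (fun t r u => fwdF_bal K A B M N U hU hMN hBe hV t r u)

lemma fwd_mk (m : M) (n : N) (u : U) :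
    fwd K A B M N U hU hMN hBe hV (BalancedTensor.mk (Aᵐᵒᵖ ⊗[K] A) (BalancedTensor B M N) U
      (BalancedTensor.mk B M N m n) u) =
    BalancedTensor.mk (Bᵐᵒᵖ ⊗[K] B) B (BalancedTensor A (BalancedTensor A N U) M) 1
      (BalancedTensor.mk A (BalancedTensor A N U) M (BalancedTensor.mk A N U n u) m) := rfl

/-- The underlying multi-additive map of the backward morphism. -/
noncomputable def bwdCore :
    N →+ U →+ M →+ B →+ BalancedTensor (Aᵐᵒᵖ ⊗[K] A) (BalancedTensor B M N) U :=
  AddMonoidHom.mk' (fun n => AddMonoidHom.mk' (fun u => AddMonoidHom.mk' (fun m =>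
      AddMonoidHom.mk'
        (fun b => BalancedTensor.mk (Aᵐᵒᵖ ⊗[K] A) (BalancedTensor B M N) U
          (BalancedTensor.mk B M N m (b • n)) u)
        (fun b b' => by
          rw [add_smul, BalancedTensor.mk_add_right' B M N,
            BalancedTensor.mk_add_left' (Aᵐᵒᵖ ⊗[K] A) (BalancedTensor B M N) U]))
      (fun m m' => AddMonoidHom.ext fun b => by
        simp only [AddMonoidHom.add_apply, AddMonoidHom.mk'_apply]
        rw [BalancedTensor.mk_add_left' B M N,
          BalancedTensor.mk_add_left' (Aᵐᵒᵖ ⊗[K] A) (BalancedTensor B M N) U]))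
    (fun u u' => AddMonoidHom.ext fun m => AddMonoidHom.ext fun b => by
      simp only [AddMonoidHom.add_apply, AddMonoidHom.mk'_apply]
      rw [BalancedTensor.mk_add_right' (Aᵐᵒᵖ ⊗[K] A) (BalancedTensor B M N) U]))
  (fun n n' => AddMonoidHom.ext fun u => AddMonoidHom.ext fun m => AddMonoidHom.ext fun b => by
    simp only [AddMonoidHom.add_apply, AddMonoidHom.mk'_apply]
    rw [smul_add, BalancedTensor.mk_add_right' B M N,
      BalancedTensor.mk_add_left' (Aᵐᵒᵖ ⊗[K] A) (BalancedTensor B M N) U])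

omit hU hMN hBe hV in
lemma bwdCore_apply (n : N) (u : U) (m : M) (b : B) :
    bwdCore K A B M N U n u m b =
    BalancedTensor.mk (Aᵐᵒᵖ ⊗[K] A) (BalancedTensor B M N) U
      (BalancedTensor.mk B M N m (b • n)) u := rfl

lemma bwdCore_bal (n : N) (a : A) (u : U) :
    bwdCore K A B M N U ((op a : Aᵐᵒᵖ) • n) u =
    bwdCore K A B M N U n (a • u) := by
  ext m b
  simp only [bwdCore_apply]
  rw [smul_comm b (op a : Aᵐᵒᵖ) n, ← BalancedTensor.rsmul_mk' B M N Aᵐᵒᵖ,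
    relX2 K A B M N U hU hMN hBe hV]

/-- The backward morphism on `N ⊗_A U`. -/
noncomputable def bwdNU : BalancedTensor A N U →+
    (M →+ B →+ BalancedTensor (Aᵐᵒᵖ ⊗[K] A) (BalancedTensor B M N) U) :=
  BalancedTensor.liftAH A N U (bwdCore K A B M N U)
    (fun n a u => bwdCore_bal K A B M N U hU hMN hBe hV n a u)

lemma bwdNU_mk (n : N) (u : U) :
    bwdNU K A B M N U hU hMN hBe hV (BalancedTensor.mk A N U n u) =
    bwdCore K A B M N U n u := rfl

lemma bwdNU_bal (w : BalancedTensor A N U) (a : A) (m : M) :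
    bwdNU K A B M N U hU hMN hBe hV ((op a : Aᵐᵒᵖ) • w) m =
    bwdNU K A B M N U hU hMN hBe hV w (a • m) := by
  ext b
  induction w using BalancedTensor.ind with
  | zero => simp only [smul_zero, map_zero, AddMonoidHom.zero_apply]
  | add s s' hs hs' =>
      simp only [smul_add, map_add, AddMonoidHom.add_apply, hs, hs']
  | hmk n u =>
      rw [BalancedTensor.rsmul_mk' A N U Aᵐᵒᵖ, bwdNU_mk, bwdNU_mk]
      simp only [bwdCore_apply]
      rw [← BalancedTensor.smul_mk B M N A, relX1 K A B M N U hU hMN hBe hV]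

/-- The backward morphism on `N ⊗_A U ⊗_A M`. -/
noncomputable def bwdV : BalancedTensor A (BalancedTensor A N U) M →+
    (B →+ BalancedTensor (Aᵐᵒᵖ ⊗[K] A) (BalancedTensor B M N) U) :=
  BalancedTensor.liftAH A (BalancedTensor A N U) M (bwdNU K A B M N U hU hMN hBe hV)
    (fun w a m => bwdNU_bal K A B M N U hU hMN hBe hV w a m)

lemma bwdV_mk (w : BalancedTensor A N U) (m : M) :
    bwdV K A B M N U hU hMN hBe hV (BalancedTensor.mk A (BalancedTensor A N U) M w m) =
    bwdNU K A B M N U hU hMN hBe hV w m := rfl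

lemma bwdH_bal (x : B) (r : Bᵐᵒᵖ ⊗[K] B) (v : BalancedTensor A (BalancedTensor A N U) M) :
    (bwdV K A B M N U hU hMN hBe hV).flip ((op r : (Bᵐᵒᵖ ⊗[K] B)ᵐᵒᵖ) • x) v =
    (bwdV K A B M N U hU hMN hBe hV).flip x (r • v) := by
  show bwdV K A B M N U hU hMN hBe hV v ((op r : (Bᵐᵒᵖ ⊗[K] B)ᵐᵒᵖ) • x) =
    bwdV K A B M N U hU hMN hBe hV (r • v) x
  induction r using TensorProduct.induction_on with
  | zero =>
    have h1 : (op (0 : Bᵐᵒᵖ ⊗[K] B)) • x = 0 := by rw [op_zero]; exact zero_smul (Bᵐᵒᵖ ⊗[K] B)ᵐᵒᵖ x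
    have h2 : (0 : Bᵐᵒᵖ ⊗[K] B) • v = 0 := zero_smul (Bᵐᵒᵖ ⊗[K] B) v
    rw [h1, h2]; simp
  | add r r' h h' =>
      rw [op_add, add_smul, map_add, add_smul, map_add, AddMonoidHom.add_apply, h, h']
  | tmul y b₂ =>
      rw [← MulOpposite.op_unop y, hBe, hV]
      induction v using BalancedTensor.ind with
      | zero => simp only [smul_zero, map_zero, AddMonoidHom.zero_apply]
      | add s s' hs hs' =>
          simp only [smul_add, map_add, AddMonoidHom.add_apply, hs, hs']
      | hmk w m =>
          rw [BalancedTensor.rsmul_mk' A (BalancedTensor A N U) M Bᵐᵒᵖ,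
            BalancedTensor.smul_mk A (BalancedTensor A N U) M B, bwdV_mk, bwdV_mk]
          induction w using BalancedTensor.ind with
          | zero => simp only [smul_zero, map_zero, AddMonoidHom.zero_apply]
          | add s s' hs hs' =>
              simp only [smul_add, map_add, AddMonoidHom.add_apply, hs, hs']
          | hmk n u =>
              rw [BalancedTensor.smul_mk A N U B, bwdNU_mk, bwdNU_mk]
              simp only [bwdCore_apply]
              rw [BalancedTensor.mk_rel B M N m (unop y), mul_smul, mul_smul]

/-- The backward morphism. -/
noncomputable def bwd : BalancedTensor (Bᵐᵒᵖ ⊗[K] B) B (BalancedTensor A (BalancedTensor A N U) M)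
    →+ BalancedTensor (Aᵐᵒᵖ ⊗[K] A) (BalancedTensor B M N) U :=
  BalancedTensor.liftAH (Bᵐᵒᵖ ⊗[K] B) B (BalancedTensor A (BalancedTensor A N U) M)
    (bwdV K A B M N U hU hMN hBe hV).flip
    (fun x r v => bwdH_bal K A B M N U hU hMN hBe hV x r v)

lemma bwd_mk (b : B) (v : BalancedTensor A (BalancedTensor A N U) M) :
    bwd K A B M N U hU hMN hBe hV
      (BalancedTensor.mk (Bᵐᵒᵖ ⊗[K] B) B (BalancedTensor A (BalancedTensor A N U) M) b v) =
    bwdV K A B M N U hU hMN hBe hV v b := rfl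

lemma bwd_fwd (x : BalancedTensor (Aᵐᵒᵖ ⊗[K] A) (BalancedTensor B M N) U) :
    bwd K A B M N U hU hMN hBe hV (fwd K A B M N U hU hMN hBe hV x) = x := by
  induction x using BalancedTensor.ind with
  | zero => simp
  | add s s' hs hs' => rw [map_add, map_add, hs, hs']
  | hmk t u =>
      induction t using BalancedTensor.ind with
      | zero =>
          rw [BalancedTensor.mk_zero_left', map_zero, map_zero]
      | add s s' hs hs' =>
          rw [BalancedTensor.mk_add_left', map_add, map_add, hs, hs']
      | hmk m n =>
          rw [fwd_mk, bwd_mk, bwdV_mk, bwdNU_mk, bwdCore_apply, one_smul]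

lemma fwd_bwd (y : BalancedTensor (Bᵐᵒᵖ ⊗[K] B) B (BalancedTensor A (BalancedTensor A N U) M)) :
    fwd K A B M N U hU hMN hBe hV (bwd K A B M N U hU hMN hBe hV y) = y := by
  induction y using BalancedTensor.ind with
  | zero => simp
  | add s s' hs hs' => rw [map_add, map_add, hs, hs']
  | hmk b v =>
      induction v using BalancedTensor.ind with
      | zero =>
          rw [BalancedTensor.mk_zero_right', map_zero, map_zero]
      | add s s' hs hs' =>
          rw [BalancedTensor.mk_add_right', map_add, map_add, hs, hs']
      | hmk w m =>
          induction w using BalancedTensor.ind with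
          | zero =>
              rw [BalancedTensor.mk_zero_left', BalancedTensor.mk_zero_right', map_zero, map_zero]
          | add s s' hs hs' =>
              rw [BalancedTensor.mk_add_left', BalancedTensor.mk_add_right', map_add, map_add,
                hs, hs']
          | hmk n u =>
              rw [bwd_mk, bwdV_mk, bwdNU_mk, bwdCore_apply, fwd_mk]
              have h := relYl K A B M N U hU hMN hBe hV b 1
              rw [one_mul] at h
              rw [h, BalancedTensor.smul_mk A (BalancedTensor A N U) M B,
                BalancedTensor.smul_mk A N U B]

end keyAux

/-- For `K`-algebras `A`, `B` projective over `K`, an `(A,B)`-bimodule `M` and a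
`(B,A)`-bimodule `N`, projective on either side, and every `A`-bimodule `U`, there is an
isomorphism `(M ⊗_B N) ⊗_{Aᵉ} U ≅ B ⊗_{Bᵉ} (N ⊗_A U ⊗_A M)` given by
`(m ⊗ n) ⊗ u ↦ 1 ⊗ (n ⊗ u ⊗ m)`. (Applied degreewise to a complex of `A`-bimodules,
e.g. the bar resolution, this is the key isomorphism of complexes.) -/
theorem key_isomorphism_of_complexes
    (K : Type u) [CommRing K] (A B : Type u) [Ring A] [Ring B] [Algebra K A] [Algebra K B]
    (hKA : Module.Projective K A) (hKB : Module.Projective K B)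
    (M : Type u) [AddCommGroup M] [Module A M] [Module Bᵐᵒᵖ M]
    [SMulCommClass A Bᵐᵒᵖ M] [SMulCommClass Bᵐᵒᵖ A M]
    (hMl : Module.Projective A M) (hMr : Module.Projective Bᵐᵒᵖ M)
    (N : Type u) [AddCommGroup N] [Module B N] [Module Aᵐᵒᵖ N]
    [SMulCommClass B Aᵐᵒᵖ N] [SMulCommClass Aᵐᵒᵖ B N]
    (hNl : Module.Projective B N) (hNr : Module.Projective Aᵐᵒᵖ N)
    -- an arbitrary `A`-bimodule `U`, which is also a left `Aᵉ`-module: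
    (U : Type u) [AddCommGroup U] [Module A U] [Module Aᵐᵒᵖ U]
    [SMulCommClass A Aᵐᵒᵖ U] [SMulCommClass Aᵐᵒᵖ A U]
    [Module (Aᵐᵒᵖ ⊗[K] A) U]
    (hU : ∀ (a a' : A) (u : U),
      (((op a : Aᵐᵒᵖ) ⊗ₜ[K] a' : Aᵐᵒᵖ ⊗[K] A)) • u = a' • ((op a : Aᵐᵒᵖ) • u))
    -- `M ⊗_B N` as a right `Aᵉ`-module, via its outer `(A,A)`-bimodule structure:
    [Module (Aᵐᵒᵖ ⊗[K] A)ᵐᵒᵖ (BalancedTensor B M N)]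
    (hMN : ∀ (a a' : A) (t : BalancedTensor B M N),
      ((op ((op a : Aᵐᵒᵖ) ⊗ₜ[K] a') : (Aᵐᵒᵖ ⊗[K] A)ᵐᵒᵖ)) • t = a • ((op a' : Aᵐᵒᵖ) • t))
    -- `B` as a right `Bᵉ`-module:
    [Module (Bᵐᵒᵖ ⊗[K] B)ᵐᵒᵖ B]
    (hBe : ∀ (b b' x : B),
      ((op ((op b : Bᵐᵒᵖ) ⊗ₜ[K] b') : (Bᵐᵒᵖ ⊗[K] B)ᵐᵒᵖ)) • x = b * x * b')
    -- `N ⊗_A U ⊗_A M` as a left `Bᵉ`-module, via its outer `(B,B)`-bimodule structure: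
    [Module (Bᵐᵒᵖ ⊗[K] B) (BalancedTensor A (BalancedTensor A N U) M)]
    (hV : ∀ (b b' : B) (v : BalancedTensor A (BalancedTensor A N U) M),
      (((op b : Bᵐᵒᵖ) ⊗ₜ[K] b' : Bᵐᵒᵖ ⊗[K] B)) • v = b' • ((op b : Bᵐᵒᵖ) • v)) :
    ∃ e : BalancedTensor (Aᵐᵒᵖ ⊗[K] A) (BalancedTensor B M N) U ≃+
        BalancedTensor (Bᵐᵒᵖ ⊗[K] B) B (BalancedTensor A (BalancedTensor A N U) M),
      ∀ (m : M) (n : N) (u : U),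
        e (BalancedTensor.mk (Aᵐᵒᵖ ⊗[K] A) (BalancedTensor B M N) U
            (BalancedTensor.mk B M N m n) u) =
          BalancedTensor.mk (Bᵐᵒᵖ ⊗[K] B) B (BalancedTensor A (BalancedTensor A N U) M)
            1 (BalancedTensor.mk A (BalancedTensor A N U) M
                (BalancedTensor.mk A N U n u) m) := by
  refine ⟨{ toFun := fwd K A B M N U hU hMN hBe hV,
            invFun := bwd K A B M N U hU hMN hBe hV,
            left_inv := bwd_fwd K A B M N U hU hMN hBe hV,
            right_inv := fwd_bwd K A B M N U hU hMN hBe hV,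
            map_add' := (fwd K A B M N U hU hMN hBe hV).map_add }, ?_⟩
  intro m n u
  exact fwd_mk K A B M N U hU hMN hBe hV m n u
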